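/- Let n ≥ 1, let E_{ij} denote the n×n matrix unit, and define Ê_{ij} = E_{ii} if i = j and Ê_{ij} = (E_{ij} + E_{ji})/√2 if i < j. Then for indices α = (i,j) and β = (k,l) with 1 ≤ i ≤ j ≤ n, 1 ≤ k ≤ l ≤ n, and (i,j) < (k,l) in lexicographic order: ‖[Ê_α, Ê_β]‖² = 1 if (i = j = k < l or i < j = k = l); ‖[Ê_α, Ê_β]‖² = 1/2 if (i < j = k < l or i = k < j < l or i < k < j = l); and ‖[Ê_α, Ê_β]‖² = 0 otherwise. -/

import Mathlib

open Matrix BigOperators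

/-- The squared Frobenius norm: sum of squares of the entries. -/
noncomputable def frobSq {n : ℕ} (A : Matrix (Fin n) (Fin n) ℝ) : ℝ :=
  ∑ i, ∑ j, (A i j) ^ 2

/-- The commutator of two matrices. -/
def mcomm {n : ℕ} (A B : Matrix (Fin n) (Fin n) ℝ) : Matrix (Fin n) (Fin n) ℝ :=
  A * B - B * A

/-- The standard orthonormal basis element `Ê_{ij}` of the space of symmetric matrices:
`Ê_{ii} = E_{ii}` and `Ê_{ij} = (E_{ij} + E_{ji})/√2` for `i ≠ j`. -/
noncomputable def Ehat {n : ℕ} (i j : Fin n) : Matrix (Fin n) (Fin n) ℝ :=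
  if i = j then Matrix.single i i (1 : ℝ)
  else (1 / Real.sqrt 2) •
    (Matrix.single i j (1 : ℝ) + Matrix.single j i (1 : ℝ))

lemma frobSq_zero' {n : ℕ} : frobSq (0 : Matrix (Fin n) (Fin n) ℝ) = 0 := by
  simp [frobSq]

lemma frobSq_single' {n : ℕ} (a b : Fin n) (c : ℝ) :
    frobSq (single a b c) = c ^ 2 := by
  simp [frobSq, single, ite_and, apply_ite (· ^ (2:ℕ)), Finset.sum_ite_eq]

lemma frobSq_pair' {n : ℕ} {a b : Fin n} (h : a ≠ b) (c d : ℝ) :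
    frobSq (single a b c - single b a d) = c ^ 2 + d ^ 2 := by
  have key : ∀ x y : Fin n,
      ((single a b c - single b a d) x y) ^ 2 =
        (single a b c x y) ^ 2 + (single b a d x y) ^ 2 := by
    intro x y
    simp only [Matrix.sub_apply, single, of_apply]
    split_ifs with h1 h2 h2
    · exact absurd (h1.1.trans h2.1.symm) h
    · ring
    · ring
    · ring
  simp only [frobSq, key, Finset.sum_add_distrib]
  have h1' := frobSq_single' a b c
  have h2' := frobSq_single' b a d
  simp only [frobSq] at h1' h2'
  rw [h1', h2']

lemma inv_sqrt_two_sq : ((Real.sqrt 2)⁻¹ * (Real.sqrt 2)⁻¹ : ℝ) = 2⁻¹ := by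
  rw [← mul_inv, Real.mul_self_sqrt] ; norm_num

/-- Formula (2.2): the values of `‖[Ê_α, Ê_β]‖²` for `α = (i,j) < (k,l) = β` (lexicographic
order, `i ≤ j`, `k ≤ l`): it is `1` if `i = j = k < l` or `i < j = k = l`; it is `1/2` if
`i < j = k < l` or `i = k < j < l` or `i < k < j = l`; and `0` otherwise. -/
theorem commutator_normSq_Ehat (n : ℕ) (i j k l : Fin n)
    (hij : i ≤ j) (hkl : k ≤ l) (hlex : i < k ∨ (i = k ∧ j < l)) :
    frobSq (mcomm (Ehat i j) (Ehat k l)) =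
      if (i = j ∧ j = k ∧ k < l) ∨ (i < j ∧ j = k ∧ k = l) then 1
      else if (i < j ∧ j = k ∧ k < l) ∨ (i = k ∧ k < j ∧ j < l) ∨
          (i < k ∧ k < j ∧ j = l) then 1 / 2
      else 0 := by
  have hs := inv_sqrt_two_sq
  have hs2 : ((Real.sqrt 2)⁻¹ : ℝ) ^ 2 = 2⁻¹ := by rw [sq]; exact hs
  rcases eq_or_lt_of_le hij with rfl | hij'
  · -- i = j
    rcases hlex with hik | ⟨rfl, hil⟩
    · -- i < k : commutator vanishes
      rcases eq_or_lt_of_le hkl with rfl | hkl'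
      · -- k = l
        have hc : mcomm (Ehat i i) (Ehat k k) = 0 := by
          simp [mcomm, Ehat, hik.ne, hik.ne']
        rw [hc, frobSq_zero', if_neg (by omega), if_neg (by omega)]
      · -- k < l
        have hil : i ≠ l := by omega
        have hc : mcomm (Ehat i i) (Ehat k l) = 0 := by
          simp [mcomm, Ehat, hik.ne, hik.ne', hkl'.ne, hil, hil.symm, mul_add, add_mul,
            smul_mul_assoc, mul_smul_comm]
        rw [hc, frobSq_zero', if_neg (by omega), if_neg (by omega)]
    · -- i = j = k < l : value 1
      have hc : mcomm (Ehat i i) (Ehat i l) =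
          single i l ((Real.sqrt 2)⁻¹) - single l i ((Real.sqrt 2)⁻¹) := by
        simp [mcomm, Ehat, hil.ne, hil.ne', mul_add, add_mul, smul_mul_assoc, mul_smul_comm,
          smul_smul, smul_add, smul_sub, Matrix.smul_single, sub_zero]
      rw [hc, frobSq_pair' hil.ne, if_pos (Or.inl ⟨rfl, rfl, hil⟩), hs2]
      norm_num
  · -- i < j
    rcases hlex with hik | ⟨rfl, hjl⟩
    · -- i < k
      rcases eq_or_lt_of_le hkl with rfl | hkl'
      · -- k = l (diagonal second factor)
        by_cases hjk : j = k
        · -- i < j = k = l : value 1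
          subst hjk
          have hc : mcomm (Ehat i j) (Ehat j j) =
              single i j ((Real.sqrt 2)⁻¹) - single j i ((Real.sqrt 2)⁻¹) := by
            simp [mcomm, Ehat, hij'.ne, hij'.ne', mul_add, add_mul, smul_mul_assoc,
              mul_smul_comm, smul_smul, smul_add, smul_sub, Matrix.smul_single]
          rw [hc, frobSq_pair' hij'.ne, if_pos (Or.inr ⟨hij', rfl, rfl⟩), hs2]
          norm_num
        · -- j ≠ k : value 0
          have hjk' : j ≠ k := hjk
          have hc : mcomm (Ehat i j) (Ehat k k) = 0 := by
            simp [mcomm, Ehat, hij'.ne, hik.ne, hik.ne', hjk', (Ne.symm hjk'), mul_add,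
              add_mul, smul_mul_assoc, mul_smul_comm]
          rw [hc, frobSq_zero', if_neg (by omega), if_neg (by omega)]
      · -- k < l
        by_cases hjk : j = k
        · -- i < j = k < l : value 1/2
          subst hjk
          have hil : i ≠ l := by omega
          have hc : mcomm (Ehat i j) (Ehat j l) =
              single i l (2⁻¹ : ℝ) - single l i (2⁻¹ : ℝ) := by
            simp [mcomm, Ehat, hij'.ne, hij'.ne', hkl'.ne, hkl'.ne', hil, hil.symm, mul_add,
              add_mul, smul_mul_assoc, mul_smul_comm, smul_smul, smul_add, smul_sub,
              Matrix.smul_single, hs]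
          rw [hc, frobSq_pair' hil, if_neg (by omega), if_pos (by omega)]
          norm_num
        · by_cases hjl : j = l
          · -- i < k < j = l : value 1/2
            subst hjl
            have hkj : k < j := by omega
            have hc : mcomm (Ehat i j) (Ehat k j) =
                single i k (2⁻¹ : ℝ) - single k i (2⁻¹ : ℝ) := by
              simp [mcomm, Ehat, hij'.ne, hij'.ne', hik.ne, hik.ne', hkj.ne, hkj.ne', mul_add,
                add_mul, smul_mul_assoc, mul_smul_comm, smul_smul, smul_add, smul_sub,
                Matrix.smul_single, hs]
            rw [hc, frobSq_pair' hik.ne, if_neg (by omega), if_pos (by omega)]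
            norm_num
          · -- all indices relations generic : value 0
            have hjk' : j ≠ k := hjk
            have hjl' : j ≠ l := hjl
            have hil : i ≠ l := by omega
            have hc : mcomm (Ehat i j) (Ehat k l) = 0 := by
              simp [mcomm, Ehat, hij'.ne, hik.ne, hik.ne', hkl'.ne, hjk', Ne.symm hjk',
                hjl', Ne.symm hjl', hil, hil.symm, mul_add, add_mul, smul_mul_assoc,
                mul_smul_comm]
            rw [hc, frobSq_zero', if_neg (by omega), if_neg (by omega)]
    · -- i = k < j < l : value 1/2
      have hil : i < l := hij'.trans hjl
      have hc : mcomm (Ehat i j) (Ehat i l) =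
          single j l (2⁻¹ : ℝ) - single l j (2⁻¹ : ℝ) := by
        simp [mcomm, Ehat, hij'.ne, hij'.ne', hjl.ne, hjl.ne', hil.ne, hil.ne', mul_add,
          add_mul, smul_mul_assoc, mul_smul_comm, smul_smul, smul_add, smul_sub,
          Matrix.smul_single, hs]
      rw [hc, frobSq_pair' hjl.ne, if_neg (by omega), if_pos (by omega)]
      norm_num
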